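/- In the Krasner F^(2,3)-hyperring R = [0,1] with f(a,b) = χ_{max(a,b)} if a ≠ b and f(a,a) = χ_{[0,a]}, and g(a,b,c) = (a·b·c)_t for a fixed t ∈ (0,1], the F-hyperideal I = [0, 0.5] is a primary F-hyperideal of R but not a prime F-hyperideal of R. -/

import Mathlib

open Set

/-- A fuzzy subset of `R`: a map into the unit interval. -/
abbrev FS (R : Type*) := R → unitInterval

/-- The support of a fuzzy subset. -/
def fsupp {R : Type*} (μ : FS R) : Set R := {a | μ a ≠ 0}

/-- Support of a `k`-ary F-(hyper)operation applied to set-valued arguments: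
`supp(h(S₁,…,S_k)) = ⋃_{aᵢ ∈ Sᵢ} supp(h(a₁,…,a_k))`. -/
def setExt {R : Type*} {k : ℕ} (h : (Fin k → R) → FS R) (S : Fin k → Set R) : Set R :=
  ⋃ a ∈ {a : Fin k → R | ∀ i, a i ∈ S i}, fsupp (h a)

/-- Argument list for the associativity axiom: the `k`-ary operation `h` applied to the
sequence `c` (of `2k-1` entries) with the result of `h` on a window of `k` consecutive
entries inserted at position `i`. -/
def nestArgs {R : Type*} (k : ℕ) (h : (Fin k → R) → FS R) (c : ℕ → R) (i : ℕ) :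
    Fin k → Set R :=
  fun j => if (j : ℕ) < i then {c j}
    else if (j : ℕ) = i then fsupp (h (fun l => c (i + (l : ℕ))))
    else {c ((j : ℕ) + k - 1)}

/-- A (commutative) Krasner F^(m,n)-hyperring: a canonical F^m-hypergroup `(R,f)` with
F-identity `e` and inverses, an associative commutative F^n-operation `g` distributive
over `f`, with `e` absorbing for `g`. (Axioms are stated at the level of supports.) -/
structure KrasnerFmn (R : Type*) (m n : ℕ) where
  f : (Fin m → R) → FS R
  g : (Fin n → R) → FS R
  e : R
  inv : R → R
  f_nonzero : ∀ a, (fsupp (f a)).Nonempty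
  g_nonzero : ∀ a, (fsupp (g a)).Nonempty
  f_assoc : ∀ (c : ℕ → R) (i j : ℕ), i < m → j < m →
    setExt f (nestArgs m f c i) = setExt f (nestArgs m f c j)
  f_comm : ∀ (a : Fin m → R) (σ : Equiv.Perm (Fin m)), f a = f (a ∘ σ)
  f_id : ∀ a : R, fsupp (f (fun i => if (i : ℕ) = 0 then a else e)) = {a}
  f_rev : ∀ (a : Fin m → R) (b : R) (i : Fin m), b ∈ fsupp (f a) →
    a i ∈ fsupp (f (Function.update (fun j => inv (a j)) i b))
  g_assoc : ∀ (c : ℕ → R) (i j : ℕ), i < n → j < n →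
    setExt g (nestArgs n g c i) = setExt g (nestArgs n g c j)
  g_comm : ∀ (a : Fin n → R) (σ : Equiv.Perm (Fin n)), g a = g (a ∘ σ)
  distrib : ∀ (x : Fin n → R) (a : Fin m → R) (i : Fin n),
    setExt g (Function.update (fun j => ({x j} : Set R)) i (fsupp (f a))) =
    setExt f (fun k => fsupp (g (Function.update x i (a k))))
  g_absorb : ∀ (x : Fin n → R) (i : Fin n), x i = e → fsupp (g x) = {e}

namespace KrasnerFmn

variable {R : Type*} {m n : ℕ}

/-- `I` is an F-hyperideal of the Krasner F^(m,n)-hyperring `K`. -/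
structure IsFHyperideal (K : KrasnerFmn R m n) (I : Set R) : Prop where
  e_mem : K.e ∈ I
  inv_mem : ∀ a ∈ I, K.inv a ∈ I
  f_closed : ∀ a : Fin m → R, (∀ i, a i ∈ I) → fsupp (K.f a) ⊆ I
  g_absorb : ∀ (x : Fin n → R) (i : Fin n),
    setExt K.g (Function.update (fun j => ({x j} : Set R)) i I) ⊆ I

/-- Prime F-hyperideal (elementwise characterization). -/
def IsPrimeF (K : KrasnerFmn R m n) (P : Set R) : Prop :=
  K.IsFHyperideal P ∧ ∀ a : Fin n → R, fsupp (K.g a) ⊆ P → ∃ i, a i ∈ P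

/-- Maximal F-hyperideal. -/
def IsMaximalF (K : KrasnerFmn R m n) (M : Set R) : Prop :=
  K.IsFHyperideal M ∧ M ≠ univ ∧
    ∀ N : Set R, K.IsFHyperideal N → M ⊆ N → N = M ∨ N = univ

/-- The Jacobson radical: the intersection of all maximal F-hyperideals
(`= R` when there are none). -/
def JacobsonF (K : KrasnerFmn R m n) : Set R := ⋂₀ {M | K.IsMaximalF M}

/-- `e'` is a scalar F-identity: `supp(g(a, e'^(n-1))) = {a}`. -/
def IsScalarId (K : KrasnerFmn R m n) (e' : R) : Prop :=
  ∀ a : R, fsupp (K.g (fun i => if (i : ℕ) = 0 then a else e')) = {a}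

/-- `x` is F-invertible: `supp(g(x, y, e'^(n-2))) = {e'}` for some `y`. -/
def FInvertible (K : KrasnerFmn R m n) (e' : R) (x : R) : Prop :=
  ∃ y : R, fsupp (K.g (fun i =>
    if (i : ℕ) = 0 then x else if (i : ℕ) = 1 then y else e')) = {e'}

/-- The F-radical of `Q`: intersection of all prime F-hyperideals containing `Q`
(`= R` when there are none). -/
def FRadical (K : KrasnerFmn R m n) (Q : Set R) : Set R :=
  ⋂₀ {P | K.IsPrimeF P ∧ Q ⊆ P}

/-- The coset `supp(f(a, I, e^(m-2)))` of `a` modulo `I`. -/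
def cosetF (K : KrasnerFmn R m n) (I : Set R) (a : R) : Set R :=
  setExt K.f (fun i => if (i : ℕ) = 0 then {a}
    else if (i : ℕ) = 1 then I else {K.e})

/-- The coset `supp(f(S, I, e^(m-2)))` of a set `S` modulo `I`. -/
def cosetSetF (K : KrasnerFmn R m n) (I : Set R) (S : Set R) : Set R :=
  setExt K.f (fun i => if (i : ℕ) = 0 then S
    else if (i : ℕ) = 1 then I else {K.e})

/-- The set `⟨x⟩_F = {a ∈ supp(g(r, x, e'^(n-2))) : r ∈ R}`. -/
def genF (K : KrasnerFmn R m n) (e' : R) (x : R) : Set R :=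
  {a | ∃ r : R, a ∈ fsupp (K.g (fun i =>
    if (i : ℕ) = 0 then r else if (i : ℕ) = 1 then x else e'))}

/-- Homomorphism of Krasner F^(m,n)-hyperrings. -/
structure IsFHom {R₁ R₂ : Type*} (K₁ : KrasnerFmn R₁ m n) (K₂ : KrasnerFmn R₂ m n)
    (h : R₁ → R₂) : Prop where
  map_e : h K₁.e = K₂.e
  map_f : ∀ x : Fin m → R₁, h '' fsupp (K₁.f x) = fsupp (K₂.f (h ∘ x))
  map_g : ∀ y : Fin n → R₁, h '' fsupp (K₁.g y) = fsupp (K₂.g (h ∘ y))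

/-- `supp(g_(l)(a^(l(n-1)+1)))`, the support of the `l`-fold iterate of `g`
applied to copies of `a` (with `gIterPow K a 0 = {a}`). -/
def gIterPow (K : KrasnerFmn R m n) (a : R) : ℕ → Set R
  | 0 => {a}
  | l + 1 => setExt K.g (fun i => if (i : ℕ) = 0 then K.gIterPow a l else {a})

/-- Primary F-hyperideal (fuzzy-subset definition). -/
def IsPrimaryF (K : KrasnerFmn R m n) (e' : R) (Q : Set R) : Prop :=
  K.IsFHyperideal Q ∧ ∀ μ : Fin n → FS R, (∀ i, (fsupp (μ i)).Nonempty) →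
    setExt K.g (fun i => fsupp (μ i)) ⊆ Q →
    ∃ i, fsupp (μ i) ⊆ Q ∨
      setExt K.g (Function.update (fun j => fsupp (μ j)) i ({e'} : Set R)) ⊆ K.FRadical Q

/-- Primary F-hyperideal (elementwise characterization). -/
def IsPrimaryElem (K : KrasnerFmn R m n) (e' : R) (Q : Set R) : Prop :=
  K.IsFHyperideal Q ∧ ∀ a : Fin n → R, fsupp (K.g a) ⊆ Q →
    ∃ i, a i ∈ Q ∨ fsupp (K.g (Function.update a i e')) ⊆ K.FRadical Q

end KrasnerFmn

open Classical in
/-- In the Krasner F^(2,3)-hyperring on `[0,1]` with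
`f(a,b) = χ_{max(a,b)}` for `a ≠ b`, `f(a,a) = χ_{[0,a]}`, and `g(a,b,c) = (a·b·c)_t`,
the F-hyperideal `I = [0, 0.5]` is primary but not prime. -/
theorem stmt16 (K : KrasnerFmn unitInterval 2 3) (t : unitInterval) (ht : t ≠ 0)
    (hf : ∀ x : Fin 2 → unitInterval, K.f x = fun y =>
      if x 0 = x 1 then (if y ≤ x 0 then 1 else 0)
      else (if y = max (x 0) (x 1) then 1 else 0))
    (hg : ∀ x : Fin 3 → unitInterval, K.g x = fun y =>
      if y = x 0 * x 1 * x 2 then t else 0)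
    (he' : K.IsScalarId 1) :
    K.IsPrimaryElem 1 {x : unitInterval | (x : ℝ) ≤ 0.5} ∧
      ¬ K.IsPrimeF {x : unitInterval | (x : ℝ) ≤ 0.5} := by
  classical
  set I : Set unitInterval := {x : unitInterval | (x : ℝ) ≤ 0.5} with hIdef
  have h10 : (1 : unitInterval) ≠ 0 := by
    intro h
    have := congrArg (Subtype.val) h
    norm_num at this
  -- support of g
  have hgsupp : ∀ x : Fin 3 → unitInterval, fsupp (K.g x) = {x 0 * x 1 * x 2} := by
    intro x
    ext y
    simp only [fsupp, hg, Set.mem_setOf_eq, Set.mem_singleton_iff]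
    constructor
    · intro h
      by_contra hy
      simp [hy] at h
    · intro h
      simp [h, ht]
  -- membership in setExt of g
  have hsetExt : ∀ (S : Fin 3 → Set unitInterval) (z : unitInterval),
      z ∈ setExt K.g S ↔ ∃ a : Fin 3 → unitInterval, (∀ i, a i ∈ S i) ∧
        z = a 0 * a 1 * a 2 := by
    intro S z
    simp only [setExt, Set.mem_iUnion, hgsupp, Set.mem_singleton_iff, Set.mem_setOf_eq]
    constructor
    · rintro ⟨a, ha, rfl⟩
      exact ⟨a, ha, rfl⟩
    · rintro ⟨a, ha, rfl⟩
      exact ⟨a, ha, rfl⟩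
  -- the hyperring identity is 0
  have he0 : K.e = 0 := by
    by_contra hne
    have h := K.f_id 0
    rw [hf] at h
    simp only [Fin.val_zero, Fin.val_one, if_true, if_false, one_ne_zero, reduceIte] at h
    simp only [if_neg (show ¬(0 : unitInterval) = K.e from fun hh => hne hh.symm)] at h
    have : K.e ∈ fsupp (fun y : unitInterval =>
        if y = max (0 : unitInterval) K.e then (1 : unitInterval) else 0) := by
      simp only [fsupp, Set.mem_setOf_eq]
      rw [if_pos (max_eq_right (unitInterval.nonneg' : (0:unitInterval) ≤ K.e)).symm]
      exact h10
    rw [h] at this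
    exact hne this
  have hmemI : ∀ x : unitInterval, x ∈ I ↔ (x : ℝ) ≤ 0.5 := fun x => Iff.rfl
  -- I is an F-hyperideal
  have hideal : K.IsFHyperideal I := by
    -- first : inv a = a for all a
    have hinv : ∀ a : unitInterval, K.inv a = a := by
      intro a
      have hmem : a ∈ fsupp (K.f (fun i : Fin 2 => if (i : ℕ) = 0 then a else K.e)) := by
        rw [K.f_id a]
        exact rfl
      have hrev := K.f_rev (fun i : Fin 2 => if (i : ℕ) = 0 then a else K.e) a 1 hmem
      have heq : Function.update
          (fun j : Fin 2 => K.inv (if ((j : ℕ) = 0) then a else K.e)) 1 a =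
          fun j : Fin 2 => if (j : ℕ) = 0 then K.inv a else a := by
        funext j
        fin_cases j <;> simp [Function.update]
      rw [heq, hf] at hrev
      simp only [fsupp, Set.mem_setOf_eq, Fin.val_zero, Fin.val_one, if_true, if_false,
        one_ne_zero, reduceIte] at hrev
      by_cases hcase : K.inv a = a
      · exact hcase
      · exfalso
        rw [if_neg hcase, he0] at hrev
        by_cases h0m : (0 : unitInterval) = max (K.inv a) a
        · have : a ≤ 0 := le_trans (le_max_right (K.inv a) a) h0m.symm.le
          have ha0 : a = 0 := le_antisymm this unitInterval.nonneg'
          have : K.inv a ≤ 0 := le_trans (le_max_left (K.inv a) a) h0m.symm.le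
          have hia0 : K.inv a = 0 := le_antisymm this unitInterval.nonneg'
          exact hcase (hia0.trans ha0.symm)
        · rw [if_neg h0m] at hrev
          exact hrev rfl
    refine ⟨?_, ?_, ?_, ?_⟩
    · rw [he0]
      show ((0 : unitInterval) : ℝ) ≤ 0.5
      norm_num
    · intro a ha
      rw [hinv a]
      exact ha
    · intro a ha
      rw [hf]
      intro y hy
      simp only [fsupp, Set.mem_setOf_eq] at hy
      by_cases hc : a 0 = a 1
      · rw [if_pos hc] at hy
        by_cases hy0 : y ≤ a 0
        · have : (y : ℝ) ≤ (a 0 : ℝ) := hy0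
          exact le_trans this (ha 0)
        · rw [if_neg hy0] at hy
          exact absurd rfl hy
      · rw [if_neg hc] at hy
        by_cases hym : y = max (a 0) (a 1)
        · have : (y : ℝ) ≤ max ((a 0 : ℝ)) ((a 1 : ℝ)) := by
            rw [hym]
            rcases max_cases (a 0) (a 1) with ⟨h1, _⟩ | ⟨h1, _⟩ <;> rw [h1]
            · exact le_max_left _ _
            · exact le_max_right _ _
          exact le_trans this (max_le (ha 0) (ha 1))
        · rw [if_neg hym] at hy
          exact absurd rfl hy
    · intro x i z hz
      rw [hsetExt] at hz
      obtain ⟨a, ha, rfl⟩ := hz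
      have hai : a i ∈ I := by
        have := ha i
        rwa [Function.update_self] at this
      have h0 := (a 0).2
      have h1 := (a 1).2
      have h2 := (a 2).2
      simp only [Set.mem_Icc] at h0 h1 h2
      show ((a 0 * a 1 * a 2 : unitInterval) : ℝ) ≤ 0.5
      rw [Set.Icc.coe_mul, Set.Icc.coe_mul]
      have hai' : (a i : ℝ) ≤ 0.5 := hai
      have H1 : (0:ℝ) ≤ (↑(a 0) * ↑(a 1)) * (1 - ↑(a 2)) :=
        mul_nonneg (mul_nonneg h0.1 h1.1) (sub_nonneg.2 h2.2)
      have H2 : (0:ℝ) ≤ ↑(a 0) * (1 - ↑(a 1)) := mul_nonneg h0.1 (sub_nonneg.2 h1.2)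
      have H3 : (0:ℝ) ≤ ↑(a 1) * (1 - ↑(a 0)) := mul_nonneg h1.1 (sub_nonneg.2 h0.2)
      have H4 : (0:ℝ) ≤ ↑(a 2) * (1 - ↑(a 0) * ↑(a 1)) :=
        mul_nonneg h2.1 (sub_nonneg.2 (show (↑(a 0):ℝ) * ↑(a 1) ≤ 1 by
          nlinarith [h0.1, h0.2, h1.1, h1.2]))
      fin_cases i <;>
        simp only [Fin.zero_eta, Fin.mk_one, Fin.reduceFinMk, Fin.isValue] at hai' <;>
        nlinarith [hai', H1, H2, H3, H4]
  -- I is contained in its F-radical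
  have hIrad : I ⊆ K.FRadical I := by
    intro z hz P hP
    exact hP.2 hz
  -- every element < 1 lies in the F-radical of I
  have hrad : ∀ x : unitInterval, (x : ℝ) < 1 → x ∈ K.FRadical I := by
    intro x hx P hP
    obtain ⟨hPprime, hIP⟩ := hP
    have aux : ∀ k : ℕ, ∀ y : unitInterval, (y : ℝ) ^ (3 ^ k) ≤ 0.5 → y ∈ P := by
      intro k
      induction k with
      | zero =>
        intro y hy
        apply hIP
        show (y : ℝ) ≤ 0.5
        simpa using hy
      | succ k ih =>
        intro y hy
        have hy3 : ((y * y * y : unitInterval) : ℝ) ^ (3 ^ k) ≤ 0.5 := by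
          rw [Set.Icc.coe_mul, Set.Icc.coe_mul,
            show ((y : ℝ) * y * y) = (y : ℝ) ^ 3 by ring, ← pow_mul,
            show 3 * 3 ^ k = 3 ^ (k + 1) by rw [pow_succ]; ring]
          exact hy
        have hmem := ih _ hy3
        obtain ⟨i, hi⟩ := hPprime.2 (fun _ => y) (by
          rw [hgsupp]
          intro w hw
          rw [Set.mem_singleton_iff] at hw
          rw [hw]
          exact hmem)
        exact hi
    obtain ⟨k, hk⟩ := exists_pow_lt_of_lt_one (show (0 : ℝ) < 0.5 by norm_num) hx
    exact aux k x (le_trans (pow_le_pow_of_le_one x.2.1 x.2.2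
      (Nat.le_of_lt (show k < 3 ^ k from Nat.lt_pow_self (by norm_num)))) hk.le)
  constructor
  · -- primary
    refine ⟨hideal, ?_⟩
    intro a ha
    rw [hgsupp, Set.singleton_subset_iff] at ha
    have hprod : ((a 0 * a 1 * a 2 : unitInterval) : ℝ) ≤ 0.5 := ha
    rw [Set.Icc.coe_mul, Set.Icc.coe_mul] at hprod
    by_cases h0 : (a 0 : ℝ) ≤ 0.5
    · exact ⟨0, Or.inl h0⟩
    by_cases h1 : (a 1 : ℝ) ≤ 0.5
    · exact ⟨1, Or.inl h1⟩
    by_cases h2 : (a 2 : ℝ) ≤ 0.5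
    · exact ⟨2, Or.inl h2⟩
    push_neg at h0 h1 h2
    refine ⟨0, Or.inr ?_⟩
    rw [hgsupp]
    have hb0 : Function.update a 0 (1 : unitInterval) 0 = 1 := Function.update_self _ _ _
    have hb1 : Function.update a 0 (1 : unitInterval) 1 = a 1 :=
      Function.update_of_ne (by decide) _ _
    have hb2 : Function.update a 0 (1 : unitInterval) 2 = a 2 :=
      Function.update_of_ne (by decide) _ _
    rw [hb0, hb1, hb2, Set.singleton_subset_iff]
    apply hrad
    rw [Set.Icc.coe_mul, Set.Icc.coe_mul]
    have ha1 := (a 1).2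
    have ha2 := (a 2).2
    simp only [Set.mem_Icc] at ha1 ha2
    have hqr : (a 1 : ℝ) * (a 2 : ℝ) < 1 := by
      nlinarith
    simp only [Set.Icc.coe_one, one_mul]
    exact hqr
  · -- not prime
    rintro ⟨-, hpr⟩
    set a : Fin 3 → unitInterval :=
      ![⟨0.8, by norm_num⟩, ⟨0.7, by norm_num⟩, ⟨0.6, by norm_num⟩] with hadef
    have ha : fsupp (K.g a) ⊆ I := by
      rw [hgsupp, Set.singleton_subset_iff]
      show ((a 0 * a 1 * a 2 : unitInterval) : ℝ) ≤ 0.5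
      rw [Set.Icc.coe_mul, Set.Icc.coe_mul]
      norm_num [hadef, Matrix.cons_val_two]
    obtain ⟨i, hi⟩ := hpr a ha
    rw [hIdef] at hi
    fin_cases i <;> norm_num [hadef, Set.mem_setOf_eq] at hi
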